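/- For every ξ ∈ ℝⁿ with |ξ| = 1, the linear map R(ξ) from the complex vector space of symmetric (n+1)×(n+1) complex matrices c = (c_{ab})_{0 ≤ a,b ≤ n} to ℂ^{n+1}, defined by R(ξ)(c)_i = -c_{i0} - √(-1) ξ_j c_{ij} + (1/2)√(-1) ξ_i c_{pp} + (1/2)√(-1) ξ_i c_{00} for 1 ≤ i ≤ n (summing j and p from 1 to n) and R(ξ)(c)_0 = -(1/2) c_{00} + (1/2) c_{pp} - √(-1) ξ_i c_{i0} (summing i and p from 1 to n), is surjective; equivalently, R(ξ) admits a right inverse. -/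

import Mathlib

/-!
Statement 7 (Lemma 3.9 / `lem:Rinvertible` of the paper): the boundary matrix
`R(ξ)`, acting from symmetric `(n+1)×(n+1)` complex matrices to `ℂ^{n+1}`,
is surjective for every unit vector `ξ`.  The index `0` is the `t`-index and
the spatial index `i ∈ {1,…,n}` is represented by `i.succ : Fin (n+1)`.
-/

noncomputable section

/-- The map `R(ξ)` of the paper: the leading coefficient of the
Fourier-transformed Bianchi operator. -/
def Rmap (n : ℕ) (ξ : EuclideanSpace ℝ (Fin n))
    (c : Matrix (Fin (n + 1)) (Fin (n + 1)) ℂ) : Fin (n + 1) → ℂ := fun a =>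
  Fin.cases
    (-(1 / 2) * c 0 0 + (1 / 2) * (∑ p : Fin n, c p.succ p.succ)
      - Complex.I * ∑ i : Fin n, (ξ i : ℂ) * c i.succ 0)
    (fun i => -(c i.succ 0) - Complex.I * (∑ j : Fin n, (ξ j : ℂ) * c i.succ j.succ)
      + (1 / 2) * Complex.I * (ξ i : ℂ) * (∑ p : Fin n, c p.succ p.succ)
      + (1 / 2) * Complex.I * (ξ i : ℂ) * c 0 0) a

/-- For each unit vector `ξ ∈ ℝⁿ`, the map `R(ξ)` is
surjective from symmetric matrices onto `ℂ^{n+1}` (equivalently, it admits a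
right inverse). -/
theorem statement7 (n : ℕ) (hn : 3 ≤ n) (ξ : EuclideanSpace ℝ (Fin n))
    (hξ : ‖ξ‖ = 1) :
    ∀ v : Fin (n + 1) → ℂ, ∃ c : Matrix (Fin (n + 1)) (Fin (n + 1)) ℂ,
      c.IsSymm ∧ Rmap n ξ c = v := by
  intro v
  -- ∑ ξ i ^ 2 = 1
  have hsumR : ∑ i : Fin n, ξ i * ξ i = 1 := by
    have h := real_inner_self_eq_norm_sq ξ
    rw [hξ] at h
    simp only [PiLp.inner_apply, RCLike.inner_apply, conj_trivial, one_pow] at h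
    simpa using h
  have hsumC : ∑ i : Fin n, (ξ i : ℂ) * (ξ i : ℂ) = 1 := by
    have := congrArg (Complex.ofReal) hsumR
    push_cast at this
    exact this
  have hne : (n : ℂ) - 1 ≠ 0 := by
    have h1 : (n : ℂ) ≠ 1 := by
      exact_mod_cast (show n ≠ 1 by omega)
    exact sub_ne_zero.mpr h1
  set s : ℂ := ∑ i : Fin n, (ξ i : ℂ) * v i.succ with hs
  set t : ℂ := (v 0 - Complex.I * s) / ((n : ℂ) - 1) with ht
  set w : Fin n → ℂ :=
    fun i => Complex.I * (ξ i : ℂ) * (((n : ℂ) / 2 - 1) * t) - v i.succ with hw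
  refine ⟨fun a b =>
    Fin.cases (Fin.cases 0 (fun j => w j) b)
      (fun i => Fin.cases (w i) (fun j => if i = j then t else 0) b) a, ?_, ?_⟩
  · -- symmetry
    unfold Matrix.IsSymm
    ext a b
    refine Fin.cases ?_ (fun i => ?_) a <;> refine Fin.cases ?_ (fun j => ?_) b <;>
      simp [Matrix.transpose_apply, Matrix.transpose, eq_comm]
  · funext a
    refine Fin.cases ?_ (fun i => ?_) a
    · -- 0-th component
      show -(1/2) * (0:ℂ) + (1/2) * (∑ p : Fin n, if p = p then t else 0)
          - Complex.I * ∑ i : Fin n, (ξ i : ℂ) * w i = v 0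
      have h1 : ∑ p : Fin n, (if p = p then t else 0) = (n : ℂ) * t := by
        simp [Finset.sum_const, mul_comm]
      have h2 : ∑ i : Fin n, (ξ i : ℂ) * w i
          = Complex.I * (((n : ℂ) / 2 - 1) * t) - s := by
        have key : ∀ i : Fin n, (ξ i : ℂ) * w i
            = (ξ i : ℂ) * (ξ i : ℂ) * (Complex.I * (((n : ℂ) / 2 - 1) * t))
              - (ξ i : ℂ) * v i.succ := by
          intro i; rw [hw]; ring
        rw [Finset.sum_congr rfl fun i _ => key i, Finset.sum_sub_distrib,
          ← Finset.sum_mul, hsumC, one_mul, hs]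
      rw [h1, h2]
      have hIt : ((n : ℂ) - 1) * t = v 0 - Complex.I * s := by
        rw [ht]; field_simp
      have hI2 : Complex.I * Complex.I = -1 := Complex.I_mul_I
      linear_combination hIt - (((n:ℂ)/2 - 1) * t) * hI2
    · -- i-th component
      show -(w i) - Complex.I * (∑ j : Fin n, (ξ j : ℂ) * if i = j then t else 0)
        + (1/2) * Complex.I * (ξ i : ℂ) * (∑ p : Fin n, if p = p then t else 0)
        + (1/2) * Complex.I * (ξ i : ℂ) * 0 = v i.succ
      have h1 : ∑ p : Fin n, (if p = p then t else 0) = (n : ℂ) * t := by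
        simp [Finset.sum_const, mul_comm]
      have h3 : ∑ j : Fin n, (ξ j : ℂ) * (if i = j then t else 0) = (ξ i : ℂ) * t := by
        simp [mul_ite]
      rw [h1, h3, hw]
      ring

end
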